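/- Let G be the complement of a directed Hamiltonian cycle on N = C(k,2) vertices. In any (k,1)-representation of G, every vertex u satisfies |Q_d(u)| = 2 and |Q_p(u)| = 2, with Q_d(u) = Q_p(u-1), and the map u ↦ Q_d(u) is a bijection from the vertex set onto the set of all 2-element subsets of {1,…,k}. -/
import Mathlib


/-- Inner product of two bit vectors. -/
def bvInner {k : ℕ} (d p : Fin k → Bool) : ℕ := ∑ q, (if d q ∧ p q then 1 else 0)

lemma bvInner_eq_card {k : ℕ} (d p : Fin k → Bool) :
    bvInner d p = ((Finset.univ.filter fun a => d a = true) ∩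
      (Finset.univ.filter fun a => p a = true)).card := by
  classical
  rw [bvInner, ← Finset.filter_and, Finset.card_filter]

/-- In any `(k,1)`-representation of the complement of a directed Hamiltonian cycle on
`N = C(k,2)` vertices, every donor and patient support has exactly two bits,
`Q_d(u) = Q_p(u-1)`, and `u ↦ Q_d(u)` is a bijection onto the 2-element subsets. -/
theorem gadget_unique_representation (k : ℕ) [NeZero (Nat.choose k 2)]
    (hN : 3 ≤ Nat.choose k 2)
    (d p : ZMod (Nat.choose k 2) → Fin k → Bool)
    (hrep : ∀ i j : ZMod (Nat.choose k 2), i ≠ j →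
      ((j ≠ i - 1) ↔ bvInner (d i) (p j) ≤ 1)) :
    (∀ u, (Finset.univ.filter (fun a => d u a = true)).card = 2 ∧
          (Finset.univ.filter (fun a => p u a = true)).card = 2 ∧
          Finset.univ.filter (fun a => d u a = true) =
            Finset.univ.filter (fun a => p (u - 1) a = true)) ∧
    (∀ u v, Finset.univ.filter (fun a => d u a = true) =
        Finset.univ.filter (fun a => d v a = true) → u = v) ∧
    (∀ S : Finset (Fin k), S.card = 2 →
      ∃ u, Finset.univ.filter (fun a => d u a = true) = S) := by
  classical
  have hNN : 3 ≤ Nat.choose k 2 := hN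
  -- basic arithmetic in ZMod (Nat.choose k 2)
  have h1 : (1 : ZMod (Nat.choose k 2)) ≠ 0 := by
    intro h
    have hd : (Nat.choose k 2 : ℕ) ∣ 1 := (CharP.cast_eq_zero_iff (ZMod (Nat.choose k 2)) (Nat.choose k 2) 1).mp (by exact_mod_cast h)
    have := Nat.le_of_dvd one_pos hd
    omega
  have h2 : (2 : ZMod (Nat.choose k 2)) ≠ 0 := by
    intro h
    have hd : (Nat.choose k 2 : ℕ) ∣ 2 := (CharP.cast_eq_zero_iff (ZMod (Nat.choose k 2)) (Nat.choose k 2) 2).mp (by exact_mod_cast h)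
    have := Nat.le_of_dvd two_pos hd
    omega
  have hsub1 : ∀ u : ZMod (Nat.choose k 2), u - 1 ≠ u := by
    intro u h
    apply h1
    have := sub_eq_iff_eq_add.mp h
    exact left_eq_add.mp this
  have hadd1 : ∀ u : ZMod (Nat.choose k 2), u + 1 ≠ u - 1 := by
    intro u h
    apply h2
    have : u + 1 - (u - 1) = 0 := by rw [h]; ring
    calc (2 : ZMod (Nat.choose k 2)) = u + 1 - (u - 1) := by ring
    _ = 0 := this
  -- the two key inequalities from the representation
  have hbig : ∀ u : ZMod (Nat.choose k 2), 2 ≤ ((Finset.univ.filter fun a => d u a = true) ∩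
      (Finset.univ.filter fun a => p (u - 1) a = true)).card := by
    intro u
    have h := hrep u (u - 1) (Ne.symm (hsub1 u))
    have : ¬ (bvInner (d u) (p (u - 1)) ≤ 1) := by
      intro hle
      exact (h.mpr hle) rfl
    rw [bvInner_eq_card] at this
    omega
  have hsmall : ∀ i j : ZMod (Nat.choose k 2), i ≠ j → j ≠ i - 1 →
      ((Finset.univ.filter fun a => d i a = true) ∩
        (Finset.univ.filter fun a => p j a = true)).card ≤ 1 := by
    intro i j hij hji
    have h := (hrep i j hij).mp hji
    rwa [bvInner_eq_card] at h
  -- choose a 2-element subset of each big intersection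
  have hex : ∀ u : ZMod (Nat.choose k 2), ∃ T ⊆ (Finset.univ.filter fun a => d u a = true) ∩
      (Finset.univ.filter fun a => p (u - 1) a = true), T.card = 2 := by
    intro u
    exact Finset.exists_subset_card_eq (hbig u)
  choose S hSsub hScard using hex
  have hSd : ∀ u, S u ⊆ (Finset.univ.filter fun a => d u a = true) :=
    fun u => (hSsub u).trans Finset.inter_subset_left
  have hSp : ∀ u, S u ⊆ (Finset.univ.filter fun a => p (u - 1) a = true) :=
    fun u => (hSsub u).trans Finset.inter_subset_right
  -- S is injective
  have hSinj : Function.Injective S := by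
    intro u v huv
    by_contra hne
    by_cases hv : v = u + 1
    · subst hv
      have hsubT : S u ⊆ (Finset.univ.filter fun a => d (u + 1) a = true) ∩
          (Finset.univ.filter fun a => p (u - 1) a = true) :=
        Finset.subset_inter (huv ▸ hSd (u + 1)) (hSp u)
      have hcard := Finset.card_le_card hsubT
      have hle := hsmall (u + 1) (u - 1) (fun h => hadd1 u h) (by
        rw [add_sub_cancel_right]; exact hsub1 u)
      rw [hScard u] at hcard
      omega
    · have hsubT : S u ⊆ (Finset.univ.filter fun a => d u a = true) ∩
          (Finset.univ.filter fun a => p (v - 1) a = true) :=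
        Finset.subset_inter (hSd u) (huv ▸ hSp v)
      have hcard := Finset.card_le_card hsubT
      have hle := hsmall u (v - 1) (by
          intro h
          exact hv (by rw [h]; ring)) (by
          intro h
          exact hne (by
            have : v - 1 + 1 = u - 1 + 1 := by rw [h]
            simpa using this.symm))
      rw [hScard u] at hcard
      omega
  -- S is surjective onto 2-element subsets
  have hSurj : ∀ T : Finset (Fin k), T.card = 2 → ∃ u, S u = T := by
    intro T hT
    have himg : Finset.image S Finset.univ = Finset.powersetCard 2 (Finset.univ : Finset (Fin k)) := by
      apply Finset.eq_of_subset_of_card_le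
      · intro T' hT'
        simp only [Finset.mem_image] at hT'
        obtain ⟨u, -, rfl⟩ := hT'
        rw [Finset.mem_powersetCard]
        exact ⟨Finset.subset_univ _, hScard u⟩
      · rw [Finset.card_powersetCard, Finset.card_image_of_injective _ hSinj,
          Finset.card_univ, Finset.card_univ, Fintype.card_fin, ZMod.card]
    have : T ∈ Finset.image S Finset.univ := by
      rw [himg, Finset.mem_powersetCard]
      exact ⟨Finset.subset_univ _, hT⟩
    simp only [Finset.mem_image] at this
    obtain ⟨u, -, hu⟩ := this
    exact ⟨u, hu⟩
  -- key: any 2-subset of Qd u other than S u is S (u+1)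
  have keyD : ∀ (u : ZMod (Nat.choose k 2)) (T : Finset (Fin k)),
      T ⊆ (Finset.univ.filter fun a => d u a = true) → T.card = 2 → T ≠ S u →
      T = S (u + 1) := by
    intro u T hTsub hTcard hTne
    obtain ⟨v, rfl⟩ := hSurj T hTcard
    have hvu : v ≠ u := fun h => hTne (by rw [h])
    by_cases h : u = v - 1
    · rw [show v = u + 1 by rw [h]; ring]
    · exfalso
      have hsubT : S v ⊆ (Finset.univ.filter fun a => d u a = true) ∩
          (Finset.univ.filter fun a => p (v - 1) a = true) :=
        Finset.subset_inter hTsub (hSp v)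
      have hcard := Finset.card_le_card hsubT
      have hle := hsmall u (v - 1) h (by
        intro hh
        exact hvu (by
          have : v - 1 + 1 = u - 1 + 1 := by rw [hh]
          simpa using this))
      rw [hTcard] at hcard
      omega
  -- key: any 2-subset of Qp (u-1) other than S u is S (u-1)
  have keyP : ∀ (u : ZMod (Nat.choose k 2)) (T : Finset (Fin k)),
      T ⊆ (Finset.univ.filter fun a => p (u - 1) a = true) → T.card = 2 → T ≠ S u →
      T = S (u - 1) := by
    intro u T hTsub hTcard hTne
    obtain ⟨v, rfl⟩ := hSurj T hTcard
    have hvu : v ≠ u := fun h => hTne (by rw [h])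
    by_cases h : v = u - 1
    · rw [h]
    · exfalso
      have hsubT : S v ⊆ (Finset.univ.filter fun a => d v a = true) ∩
          (Finset.univ.filter fun a => p (u - 1) a = true) :=
        Finset.subset_inter (hSd v) hTsub
      have hcard := Finset.card_le_card hsubT
      have hle := hsmall v (u - 1) h (by
        intro hh
        exact hvu (by
          have : u - 1 + 1 = v - 1 + 1 := by rw [hh]
          simpa using this.symm))
      rw [hTcard] at hcard
      omega
  -- Qd u = S u
  have hQdS : ∀ u, (Finset.univ.filter fun a => d u a = true) = S u := by
    intro u
    refine Finset.Subset.antisymm ?_ (hSd u)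
    intro x hx
    by_contra hxS
    obtain ⟨a, b, hab, hSab⟩ := Finset.card_eq_two.mp (hScard u)
    have hxa : x ≠ a := fun h => hxS (by rw [hSab, h]; simp)
    have hxb : x ≠ b := fun h => hxS (by rw [hSab, h]; simp)
    have haQ : a ∈ (Finset.univ.filter fun a => d u a = true) := hSd u (by rw [hSab]; simp)
    have hbQ : b ∈ (Finset.univ.filter fun a => d u a = true) := hSd u (by rw [hSab]; simp)
    have h1T : ({x, a} : Finset (Fin k)) = S (u + 1) := by
      refine keyD u _ ?_ ?_ ?_
      · intro y hy
        simp only [Finset.mem_insert, Finset.mem_singleton] at hy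
        rcases hy with rfl | rfl
        · exact hx
        · exact haQ
      · rw [Finset.card_insert_of_notMem (by simp [hxa]), Finset.card_singleton]
      · intro h
        exact hxS (h ▸ (by simp))
    have h2T : ({x, b} : Finset (Fin k)) = S (u + 1) := by
      refine keyD u _ ?_ ?_ ?_
      · intro y hy
        simp only [Finset.mem_insert, Finset.mem_singleton] at hy
        rcases hy with rfl | rfl
        · exact hx
        · exact hbQ
      · rw [Finset.card_insert_of_notMem (by simp [hxb]), Finset.card_singleton]
      · intro h
        exact hxS (h ▸ (by simp))
    have : ({x, a} : Finset (Fin k)) = {x, b} := by rw [h1T, h2T]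
    have ha : a ∈ ({x, b} : Finset (Fin k)) := by rw [← this]; simp
    simp only [Finset.mem_insert, Finset.mem_singleton] at ha
    rcases ha with h | h
    · exact hxa h.symm
    · exact hab h
  -- Qp (u-1) = S u
  have hQpS : ∀ u, (Finset.univ.filter fun a => p (u - 1) a = true) = S u := by
    intro u
    refine Finset.Subset.antisymm ?_ (hSp u)
    intro x hx
    by_contra hxS
    obtain ⟨a, b, hab, hSab⟩ := Finset.card_eq_two.mp (hScard u)
    have hxa : x ≠ a := fun h => hxS (by rw [hSab, h]; simp)
    have hxb : x ≠ b := fun h => hxS (by rw [hSab, h]; simp)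
    have haQ : a ∈ (Finset.univ.filter fun a => p (u - 1) a = true) := hSp u (by rw [hSab]; simp)
    have hbQ : b ∈ (Finset.univ.filter fun a => p (u - 1) a = true) := hSp u (by rw [hSab]; simp)
    have h1T : ({x, a} : Finset (Fin k)) = S (u - 1) := by
      refine keyP u _ ?_ ?_ ?_
      · intro y hy
        simp only [Finset.mem_insert, Finset.mem_singleton] at hy
        rcases hy with rfl | rfl
        · exact hx
        · exact haQ
      · rw [Finset.card_insert_of_notMem (by simp [hxa]), Finset.card_singleton]
      · intro h
        exact hxS (h ▸ (by simp))
    have h2T : ({x, b} : Finset (Fin k)) = S (u - 1) := by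
      refine keyP u _ ?_ ?_ ?_
      · intro y hy
        simp only [Finset.mem_insert, Finset.mem_singleton] at hy
        rcases hy with rfl | rfl
        · exact hx
        · exact hbQ
      · rw [Finset.card_insert_of_notMem (by simp [hxb]), Finset.card_singleton]
      · intro h
        exact hxS (h ▸ (by simp))
    have : ({x, a} : Finset (Fin k)) = {x, b} := by rw [h1T, h2T]
    have ha : a ∈ ({x, b} : Finset (Fin k)) := by rw [← this]; simp
    simp only [Finset.mem_insert, Finset.mem_singleton] at ha
    rcases ha with h | h
    · exact hxa h.symm
    · exact hab h
  refine ⟨fun u => ⟨?_, ?_, ?_⟩, fun u v h => ?_, fun T hT => ?_⟩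
  · rw [hQdS u]; exact hScard u
  · have := hQpS (u + 1)
    rw [add_sub_cancel_right] at this
    rw [this]; exact hScard (u + 1)
  · rw [hQdS u, hQpS u]
  · rw [hQdS u, hQdS v] at h
    exact hSinj h
  · obtain ⟨u, hu⟩ := hSurj T hT
    exact ⟨u, by rw [hQdS u, hu]⟩
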